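/- Let m ≥ 3 be an odd integer, h a positive integer with gcd(m,h) = 1, n = 2^m − 1, and let α be a primitive element of the finite field F_{2^m} (a generator of its multiplicative group). Let C = { c = (c_0, …, c_{n−1}) ∈ F_2^n : Σ_{i=0}^{n−1} c_i · α^{(2^h+1)·i} = 0 in F_{2^m} and Σ_{i=0}^{n−1} c_i = 0 in F_2 }, where c_i · x denotes scalar multiplication of x ∈ F_{2^m} by c_i ∈ F_2. Then C is an F_2-linear subspace of F_2^n of dimension 2^m − 2 − m, and the minimum Hamming weight of a nonzero element of C equals 4. -/

import Mathlib

theorem stmt_3 (m : ℕ) (hm : 3 ≤ m) (hmo : Odd m) (h : ℕ) (hh : 0 < h)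
    (hgcd : Nat.gcd m h = 1) (n : ℕ) (hn : n = 2 ^ m - 1)
    (F : Type) [Field F] [Fintype F] [Algebra (ZMod 2) F]
    (hF : Fintype.card F = 2 ^ m) (α : F) (hα : orderOf α = n)
    (C : Set (Fin n → ZMod 2))
    (hC : C = {c | (∑ i : Fin n, c i • α ^ ((2 ^ h + 1) * (i : ℕ)) = 0) ∧
                   (∑ i : Fin n, c i = 0)}) :
    (∃ W : Submodule (ZMod 2) (Fin n → ZMod 2),
        (W : Set (Fin n → ZMod 2)) = C ∧ Module.finrank (ZMod 2) W = 2 ^ m - 2 - m) ∧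
    IsLeast {w : ℕ | ∃ c ∈ C, c ≠ 0 ∧ hammingNorm c = w} 4 := by
  classical
  subst hC
  set k := 2 ^ h + 1 with hk
  have h8 : 8 ≤ 2 ^ m := by
    calc (8:ℕ) = 2 ^ 3 := by norm_num
    _ ≤ 2 ^ m := Nat.pow_le_pow_right (by norm_num) hm
  have hn0 : 0 < n := by omega
  -- characteristic two facts
  have h2 : (2 : F) = 0 := by
    have h1 : ((2:ℕ) : F) = algebraMap (ZMod 2) F ((2:ℕ) : ZMod 2) := (map_natCast _ 2).symm
    have h2' : ((2:ℕ) : ZMod 2) = 0 := by decide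
    rw [h2'] at h1
    simpa using h1
  have hxx : ∀ x : F, x + x = 0 := fun x => by
    rw [← two_mul, h2, zero_mul]
  have hneg : ∀ x : F, -x = x := fun x => by
    rw [neg_eq_iff_add_eq_zero, hxx]
  -- α is nonzero
  have hα0 : α ≠ 0 := by
    intro e
    have hpow := pow_orderOf_eq_one α
    rw [hα, e, zero_pow (by omega)] at hpow
    exact zero_ne_one hpow
  -- coprimality of n and k
  have hcop : Nat.gcd n k = 1 := by
    set d := Nat.gcd n k with hd
    have hd1 : d ∣ 2 ^ m - 1 := hn ▸ Nat.gcd_dvd_left _ _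
    have hd2 : d ∣ 2 ^ h + 1 := Nat.gcd_dvd_right _ _
    have e1 : (2 : ZMod d) ^ m = 1 := by
      have h0 : ((2 ^ m - 1 : ℕ) : ZMod d) = 0 := (ZMod.natCast_eq_zero_iff _ _).2 hd1
      have h1 : (1:ℕ) ≤ 2 ^ m := Nat.one_le_two_pow
      rw [Nat.cast_sub h1] at h0
      push_cast at h0
      linear_combination h0
    have e2 : (2 : ZMod d) ^ h = -1 := by
      have h0 : ((2 ^ h + 1 : ℕ) : ZMod d) = 0 := (ZMod.natCast_eq_zero_iff _ _).2 hd2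
      push_cast at h0
      linear_combination h0
    have o1 : orderOf (2 : ZMod d) ∣ m := orderOf_dvd_of_pow_eq_one e1
    have o2 : orderOf (2 : ZMod d) ∣ 2 * h := by
      apply orderOf_dvd_of_pow_eq_one
      rw [mul_comm, pow_mul, e2]
      ring
    have hctwo : Nat.Coprime m 2 := Nat.coprime_two_right.2 hmo
    have hcm : Nat.Coprime m (2 * h) := Nat.Coprime.mul_right hctwo hgcd
    have o3 : orderOf (2 : ZMod d) ∣ 1 := by
      have hdd := Nat.dvd_gcd o1 o2
      rwa [hcm] at hdd
    have e3 : (2 : ZMod d) = 1 := by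
      have hdd := orderOf_dvd_iff_pow_eq_one.1 o3
      simpa using hdd
    have e4 : (2 : ZMod d) = 0 := by
      have h5 : (1 : ZMod d) = -1 := by rw [← e2, e3, one_pow]
      linear_combination h5
    have hdvd : d ∣ 2 := by
      have h6 : ((2:ℕ) : ZMod d) = 0 := by push_cast; exact e4
      exact (ZMod.natCast_eq_zero_iff _ _).1 h6
    rcases (Nat.dvd_prime Nat.prime_two).1 hdvd with h1 | h1
    · exact h1
    · exfalso
      have h2d : (2:ℕ) ∣ 2 ^ m - 1 := h1 ▸ hd1
      have h2m : (2:ℕ) ∣ 2 ^ m := dvd_pow_self 2 (by omega)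
      omega
  -- the element β and its powers
  set β := α ^ k with hβdef
  have hβ : orderOf β = n := by
    have hk0 : k ≠ 0 := by
      have := Nat.one_le_two_pow (n := h)
      omega
    rw [hβdef, orderOf_pow' α hk0, hα, hcop, Nat.div_one]
  have hβ0 : β ≠ 0 := pow_ne_zero _ hα0
  have hβp0 : ∀ i : ℕ, β ^ i ≠ 0 := fun i => pow_ne_zero _ hβ0
  have hpowmul : ∀ i : ℕ, α ^ (k * i) = β ^ i := fun i => by
    rw [hβdef, ← pow_mul]
  have hinj : ∀ i j : Fin n, β ^ (i:ℕ) = β ^ (j:ℕ) → i = j := by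
    intro i j hij
    have hij2 := pow_injOn_Iio_orderOf (x := β) (by rw [hβ]; exact i.2) (by rw [hβ]; exact j.2) hij
    exact Fin.ext hij2
  have hsurj : ∀ x : F, x ≠ 0 → ∃ i : Fin n, β ^ (i:ℕ) = x := by
    intro x hx
    have hcards : Fintype.card {y : F // y ≠ 0} = n := by
      rw [Fintype.card_subtype_compl]
      simp [hF, hn]
    let e : Fin n → {y : F // y ≠ 0} := fun i => ⟨β ^ (i:ℕ), hβp0 _⟩
    have hbij : Function.Bijective e := by
      rw [Fintype.bijective_iff_injective_and_card]
      constructor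
      · intro i j hij
        exact hinj i j (congrArg Subtype.val hij)
      · simp [hcards]
    obtain ⟨i, hi⟩ := hbij.2 ⟨x, hx⟩
    exact ⟨i, congrArg Subtype.val hi⟩
  -- sums in terms of supports
  have hzo : ∀ x : ZMod 2, x ≠ 0 → x = 1 := by decide
  have hsum1 : ∀ c : Fin n → ZMod 2,
      (∑ i : Fin n, c i • α ^ (k * (i:ℕ))) =
        ∑ i ∈ Finset.univ.filter (fun i => c i ≠ 0), β ^ (i:ℕ) := by
    intro c
    rw [Finset.sum_filter]
    apply Finset.sum_congr rfl
    intro i _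
    by_cases hci : c i ≠ 0
    · rw [if_pos hci, hzo _ hci, one_smul, hpowmul]
    · push_neg at hci
      simp [hci]
  have hsum2 : ∀ c : Fin n → ZMod 2,
      (∑ i : Fin n, c i) = ((Finset.univ.filter (fun i => c i ≠ 0)).card : ZMod 2) := by
    intro c
    have hstep : (∑ i : Fin n, c i) = ∑ i ∈ Finset.univ.filter (fun i => c i ≠ 0), (1 : ZMod 2) := by
      rw [Finset.sum_filter]
      apply Finset.sum_congr rfl
      intro i _
      by_cases hci : c i ≠ 0
      · rw [if_pos hci, hzo _ hci]
      · push_neg at hci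
        simp [hci]
    rw [hstep, Finset.sum_const, nsmul_eq_mul, mul_one]
  have hnorm : ∀ c : Fin n → ZMod 2,
      hammingNorm c = (Finset.univ.filter (fun i => c i ≠ 0)).card := by
    intro c
    rfl
  -- the existence of elements avoiding finite sets
  have hexists : ∀ s : Finset F, s.card < Fintype.card F → ∃ y, y ∉ s := by
    intro s hs
    have h0 : 0 < sᶜ.card := by rw [Finset.card_compl]; omega
    obtain ⟨y, hy⟩ := Finset.card_pos.mp h0
    exact ⟨y, Finset.mem_compl.1 hy⟩
  -- the linear map
  let φ : (Fin n → ZMod 2) →ₗ[ZMod 2] F × ZMod 2 :=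
    { toFun := fun c => (∑ i : Fin n, c i • α ^ (k * (i:ℕ)), ∑ i : Fin n, c i),
      map_add' := by
        intro a b
        simp [add_smul, Finset.sum_add_distrib, Prod.ext_iff]
      map_smul' := by
        intro r c
        simp [smul_smul, Finset.smul_sum, Prod.ext_iff, Finset.mul_sum, smul_eq_mul] }
  have hφ : ∀ c : Fin n → ZMod 2,
      φ c = (∑ i : Fin n, c i • α ^ (k * (i:ℕ)), ∑ i : Fin n, c i) := fun _ => rfl
  have hsingle : ∀ i : Fin n, φ (Pi.single (M := fun _ => ZMod 2) i 1) = (β ^ (i:ℕ), 1) := by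
    intro i
    rw [hφ]
    have e1 : (∑ j : Fin n, (Pi.single i (1:ZMod 2) : Fin n → ZMod 2) j • α ^ (k * (j:ℕ))) = β ^ (i:ℕ) := by
      rw [Finset.sum_eq_single i]
      · rw [Pi.single_eq_same, one_smul, hpowmul]
      · intro j _ hj
        rw [Pi.single_eq_of_ne hj, zero_smul]
      · intro hnot
        exact absurd (Finset.mem_univ i) hnot
    have e2 : (∑ j : Fin n, (Pi.single i (1:ZMod 2) : Fin n → ZMod 2) j) = 1 := by
      rw [Finset.sum_eq_single i]
      · rw [Pi.single_eq_same]
      · intro j _ hj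
        rw [Pi.single_eq_of_ne hj]
      · intro hnot
        exact absurd (Finset.mem_univ i) hnot
    rw [e1, e2]
  have hmem1 : ∀ x : F, x ≠ 0 → (x, (1:ZMod 2)) ∈ LinearMap.range φ := by
    intro x hx
    obtain ⟨i, hi⟩ := hsurj x hx
    exact ⟨Pi.single i 1, by rw [hsingle i, hi]⟩
  obtain ⟨y, hy01⟩ : ∃ y : F, y ∉ ({0, 1} : Finset F) := by
    apply hexists
    have hle : ({0, 1} : Finset F).card ≤ 2 := by
      apply le_trans (Finset.card_insert_le _ _)
      simp
    omega
  simp only [Finset.mem_insert, Finset.mem_singleton, not_or] at hy01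
  obtain ⟨hy0, hy1⟩ := hy01
  have h1y0 : (1 : F) + y ≠ 0 := by
    intro e
    apply hy1
    have e2 : y = -1 := by linear_combination e
    rw [hneg] at e2
    exact e2
  have hmem01 : ((0:F), (1:ZMod 2)) ∈ LinearMap.range φ := by
    obtain ⟨i0, hi0⟩ := hsurj 1 one_ne_zero
    obtain ⟨i1, hi1⟩ := hsurj y hy0
    obtain ⟨i2, hi2⟩ := hsurj (1 + y) h1y0
    refine ⟨Pi.single i0 1 + Pi.single i1 1 + Pi.single i2 1, ?_⟩
    rw [map_add, map_add, hsingle, hsingle, hsingle, hi0, hi1, hi2]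
    have hfst : (1 : F) + y + (1 + y) = 0 := by linear_combination hxx (1 + y)
    have hsnd : (1 : ZMod 2) + 1 + 1 = 1 := by decide
    rw [Prod.mk_add_mk, Prod.mk_add_mk, hfst, hsnd]
  have hrtop : LinearMap.range φ = ⊤ := by
    rw [Submodule.eq_top_iff']
    rintro ⟨x, t⟩
    rcases (show t = 0 ∨ t = 1 from by revert t; decide) with rfl | rfl
    · by_cases hx : x = 0
      · subst hx
        exact zero_mem _
      · have hadd := Submodule.add_mem _ (hmem1 x hx) hmem01
        have h11 : (1 : ZMod 2) + 1 = 0 := by decide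
        rw [Prod.mk_add_mk, add_zero, h11] at hadd
        exact hadd
    · by_cases hx : x = 0
      · subst hx
        exact hmem01
      · exact hmem1 x hx
  have hfinF : Module.finrank (ZMod 2) F = m := by
    have hcard := Module.card_eq_pow_finrank (K := ZMod 2) (V := F)
    rw [hF, ZMod.card] at hcard
    exact (Nat.pow_right_injective le_rfl hcard.symm)
  have hrank := LinearMap.finrank_range_add_finrank_ker φ
  rw [hrtop, finrank_top, Module.finrank_prod, hfinF, Module.finrank_self,
    Module.finrank_pi, Fintype.card_fin] at hrank
  constructor
  · refine ⟨LinearMap.ker φ, ?_, ?_⟩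
    · ext c
      rw [SetLike.mem_coe, LinearMap.mem_ker, hφ, Prod.ext_iff]
      rfl
    · omega
  · constructor
    · -- a codeword of weight 4
      obtain ⟨z, hz⟩ : ∃ z : F, z ∉ ({0, 1, y, 1 + y} : Finset F) := by
        apply hexists
        have hle : ({0, 1, y, 1 + y} : Finset F).card ≤ 4 := by
          apply le_trans (Finset.card_insert_le _ _)
          have hle2 : ({1, y, 1 + y} : Finset F).card ≤ 3 := by
            apply le_trans (Finset.card_insert_le _ _)
            have hle3 : ({y, 1 + y} : Finset F).card ≤ 2 := by
              apply le_trans (Finset.card_insert_le _ _)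
              simp
            omega
          omega
        omega
      simp only [Finset.mem_insert, Finset.mem_singleton, not_or] at hz
      obtain ⟨hz0, hz1, hzy, hz1y⟩ := hz
      set w := 1 + y + z with hwdef
      have hw0 : w ≠ 0 := by
        intro e
        apply hz1y
        have e2 : z = -(1 + y) := by rw [hwdef] at e; linear_combination e
        rw [hneg] at e2
        exact e2
      have hw1 : w ≠ 1 := by
        intro e
        apply hzy
        have e2 : z = -y := by rw [hwdef] at e; linear_combination e
        rw [hneg] at e2
        exact e2
      have hwy : w ≠ y := by
        intro e
        apply hz1
        have e2 : z = -1 := by rw [hwdef] at e; linear_combination e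
        rw [hneg] at e2
        exact e2
      have hwz : w ≠ z := by
        intro e
        apply hy1
        have e2 : y = -1 := by rw [hwdef] at e; linear_combination e
        rw [hneg] at e2
        exact e2
      obtain ⟨i1, hi1⟩ := hsurj 1 one_ne_zero
      obtain ⟨i2, hi2⟩ := hsurj y hy0
      obtain ⟨i3, hi3⟩ := hsurj z hz0
      obtain ⟨i4, hi4⟩ := hsurj w hw0
      have d12 : i1 ≠ i2 := fun e => hy1 (by rw [← hi2, ← e, hi1])
      have d13 : i1 ≠ i3 := fun e => hz1 (by rw [← hi3, ← e, hi1])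
      have d14 : i1 ≠ i4 := fun e => hw1 (by rw [← hi4, ← e, hi1])
      have d23 : i2 ≠ i3 := fun e => hzy (by rw [← hi3, ← e, hi2])
      have d24 : i2 ≠ i4 := fun e => hwy (by rw [← hi4, ← e, hi2])
      have d34 : i3 ≠ i4 := fun e => hwz (by rw [← hi4, ← e, hi3])
      set c : Fin n → ZMod 2 :=
        fun j => if j = i1 ∨ j = i2 ∨ j = i3 ∨ j = i4 then 1 else 0 with hcdef
      have hsupp : Finset.univ.filter (fun i => c i ≠ 0) = {i1, i2, i3, i4} := by
        ext j
        simp only [Finset.mem_filter, Finset.mem_univ, true_and, hcdef,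
          Finset.mem_insert, Finset.mem_singleton]
        by_cases hj : j = i1 ∨ j = i2 ∨ j = i3 ∨ j = i4
        · simp [hj]
        · simp [hj]
      have hcard4 : ({i1, i2, i3, i4} : Finset (Fin n)).card = 4 := by
        rw [Finset.card_insert_of_notMem (by simp [d12, d13, d14]),
          Finset.card_insert_of_notMem (by simp [d23, d24]),
          Finset.card_insert_of_notMem (by simp [d34]),
          Finset.card_singleton]
      refine ⟨c, ⟨?_, ?_⟩, ?_, ?_⟩
      · rw [hsum1 c, hsupp, Finset.sum_insert (by simp [d12, d13, d14]),
          Finset.sum_insert (by simp [d23, d24]), Finset.sum_insert (by simp [d34]),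
          Finset.sum_singleton, hi1, hi2, hi3, hi4, hwdef]
        linear_combination hxx (1 + y + z)
      · rw [hsum2 c, hsupp, hcard4]
        decide
      · intro e
        have he := congrFun e i1
        rw [hcdef] at he
        simp at he
      · rw [hnorm c, hsupp, hcard4]
    · -- lower bound
      rintro v ⟨c, ⟨hc1, hc2⟩, hc0, rfl⟩
      set s := Finset.univ.filter (fun i => c i ≠ 0) with hsdef
      have heven : 2 ∣ s.card := by
        rw [hsum2 c] at hc2
        exact (ZMod.natCast_eq_zero_iff _ _).1 hc2
      have hne0 : s.card ≠ 0 := by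
        intro e
        apply hc0
        funext i
        show c i = 0
        by_contra hci
        have hi : i ∈ s := by simp [hsdef, hci]
        rw [Finset.card_eq_zero.1 e] at hi
        exact absurd hi (Finset.notMem_empty i)
      have hne2 : s.card ≠ 2 := by
        intro e
        obtain ⟨i, j, hij, hs⟩ := Finset.card_eq_two.1 e
        rw [hsum1 c] at hc1
        rw [← hsdef, hs, Finset.sum_insert (by simp [hij]), Finset.sum_singleton] at hc1
        have heq : β ^ (i:ℕ) = β ^ (j:ℕ) := by
          have h7 := eq_neg_of_add_eq_zero_left hc1
          rwa [hneg] at h7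
        exact hij (hinj i j heq)
      rw [hnorm c, ← hsdef]
      omega
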